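/- arXiv:1506.04784 — 2 statements merged into one kernel-verified Lean document; each statement's English description precedes it below -/
import Mathlib

section
/- Let p be a positive real number and let α₁, α₂, α₃, α₄ be complex numbers with |αᵢ| = √p for all i. If the sum of the six pairwise products Σ_{1 ≤ i < j ≤ 4} αᵢαⱼ equals 6p, then either αᵢ = √p for all i, or αᵢ = −√p for all i. -/
theorem all_eq_sqrt_of_sum_pairwise_prod (p : ℝ) (hp : 0 < p) (α : Fin 4 → ℂ)
    (habs : ∀ i, ‖α i‖ = Real.sqrt p)
    (hsum : ∑ ij ∈ Finset.univ.filter (fun ij : Fin 4 × Fin 4 => ij.1 < ij.2),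
      α ij.1 * α ij.2 = (6 * p : ℂ)) :
    (∀ i, α i = (Real.sqrt p : ℂ)) ∨ (∀ i, α i = -(Real.sqrt p : ℂ)) := by
  set s := Finset.univ.filter (fun ij : Fin 4 × Fin 4 => ij.1 < ij.2) with hs
  have hcard : s.card = 6 := by decide
  have habsprod : ∀ ij : Fin 4 × Fin 4, ‖α ij.1 * α ij.2‖ = p := by
    intro ij
    rw [norm_mul, habs, habs, Real.mul_self_sqrt hp.le]
  have hre_le : ∀ ij ∈ s, (α ij.1 * α ij.2).re ≤ p := by
    intro ij _
    calc (α ij.1 * α ij.2).re ≤ ‖α ij.1 * α ij.2‖ := Complex.re_le_norm _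
    _ = p := habsprod ij
  have hre_sum : ∑ ij ∈ s, (α ij.1 * α ij.2).re = ∑ _ij ∈ s, p := by
    have := congrArg Complex.re hsum
    rw [Complex.re_sum] at this
    rw [this, Finset.sum_const, hcard]
    simp
  have hre_eq : ∀ ij ∈ s, (α ij.1 * α ij.2).re = p := by
    intro ij hij
    exact ((Finset.sum_eq_sum_iff_of_le hre_le).mp hre_sum ij hij)
  have hprod : ∀ ij : Fin 4 × Fin 4, ij.1 < ij.2 → α ij.1 * α ij.2 = (p : ℂ) := by
    intro ij hlt
    have hmem : ij ∈ s := by simp [hs, hlt]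
    have hre := hre_eq ij hmem
    have habs2 : Complex.normSq (α ij.1 * α ij.2) = p ^ 2 := by
      rw [← Complex.sq_norm, habsprod]
    have him : (α ij.1 * α ij.2).im = 0 := by
      have : (α ij.1 * α ij.2).re ^ 2 + (α ij.1 * α ij.2).im ^ 2 = p ^ 2 := by
        rw [← habs2, Complex.normSq_apply]; ring
      nlinarith [sq_nonneg (α ij.1 * α ij.2).im]
    apply Complex.ext <;> simp [hre, him]
  have hne : ∀ i, α i ≠ 0 := by
    intro i h
    have := habs i
    rw [h, norm_zero] at this
    have := Real.sqrt_pos.mpr hp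
    linarith
  -- all equal
  have h01 : α 0 * α 1 = (p : ℂ) := hprod (0, 1) (by decide)
  have h02 : α 0 * α 2 = (p : ℂ) := hprod (0, 2) (by decide)
  have h03 : α 0 * α 3 = (p : ℂ) := hprod (0, 3) (by decide)
  have h12 : α 1 * α 2 = (p : ℂ) := hprod (1, 2) (by decide)
  have e12 : α 1 = α 2 := mul_left_cancel₀ (hne 0) (h01.trans h02.symm)
  have e13 : α 1 = α 3 := mul_left_cancel₀ (hne 0) (h01.trans h03.symm)
  have e01 : α 0 = α 1 := mul_right_cancel₀ (hne 2) (h02.trans h12.symm)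
  have hsq : α 0 * α 0 = (p : ℂ) := by
    rw [e01]; rw [← e12] at h12; exact h12
  have hfac : (α 0 - Real.sqrt p) * (α 0 + Real.sqrt p) = 0 := by
    have h2 : ((Real.sqrt p : ℝ) : ℂ) * ((Real.sqrt p : ℝ) : ℂ) = (p : ℂ) := by
      norm_cast
      exact Real.mul_self_sqrt hp.le
    linear_combination hsq - h2
  have : α 0 = (Real.sqrt p : ℂ) ∨ α 0 = -(Real.sqrt p : ℂ) := by
    rcases mul_eq_zero.mp hfac with h | h
    · left; linear_combination h
    · right; linear_combination h
  have hall : ∀ i, α i = α 0 := by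
    intro i
    fin_cases i <;> simp [e01, ← e12, ← e13]
  rcases this with h | h
  · left; intro i; rw [hall i, h]
  · right; intro i; rw [hall i, h]
end

section
/- Let p be a prime number. There is no monic polynomial P of degree 4 with integer coefficients such that every complex root of P has absolute value √p and the coefficient of X² in P equals 6p. -/
-- helper: complex number with normSq = p^2 and re = p equals p
lemma eq_of_normSq_re {z : ℂ} {q : ℝ} (h1 : Complex.normSq z = q * q) (h2 : z.re = q) :
    z = (q : ℂ) := by
  have him : z.im = 0 := by
    have := Complex.normSq_apply z
    rw [h1, h2] at this
    have : z.im * z.im = 0 := by linarith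
    exact mul_self_eq_zero.mp this
  apply Complex.ext <;> simp [h2, him]

lemma no_sq_16p (p : ℕ) (hp : p.Prime) (n : ℤ) (h : n ^ 2 = 16 * p) : False := by
  have hp2 : Prime (p : ℤ) := Nat.prime_iff_prime_int.mp hp
  have hdvd : (p : ℤ) ∣ n := hp2.dvd_of_dvd_pow (n := 2) ⟨16, by linarith⟩
  obtain ⟨m, rfl⟩ := hdvd
  have hppos : (0 : ℤ) < p := by exact_mod_cast hp.pos
  have h16 : (p : ℤ) * m ^ 2 = 16 := by
    have : (p:ℤ) * ((p:ℤ) * m ^ 2) = (p:ℤ) * 16 := by ring_nf; ring_nf at h; linarith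
    exact mul_left_cancel₀ (by positivity) this
  have hpd16 : (p : ℤ) ∣ 16 := ⟨m ^ 2, h16.symm⟩
  have hpn : p ∣ 16 := by exact_mod_cast hpd16
  have hp2' : p = 2 := by
    have : p ∣ 2 ^ 4 := by norm_num at hpn ⊢; exact hpn
    have := hp.dvd_of_dvd_pow this
    exact (Nat.prime_dvd_prime_iff_eq hp Nat.prime_two).mp this
  subst hp2'
  have hm8 : m ^ 2 = 8 := by push_cast at h16; linarith
  have hb1 : m ≤ 3 := by nlinarith
  have hb2 : -3 ≤ m := by nlinarith
  interval_cases m <;> omega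

open Polynomial in
theorem no_monic_quartic_with_coeff_two_eq_six_p (p : ℕ) (hp : p.Prime) :
    ¬ ∃ P : Polynomial ℤ, P.Monic ∧ P.natDegree = 4 ∧
      (∀ z : ℂ, (P.map (Int.castRingHom ℂ)).IsRoot z → ‖z‖ = Real.sqrt p) ∧
      P.coeff 2 = 6 * p := by
  rintro ⟨P, hmon, hdeg, hroots, hc2⟩
  set Q := P.map (Int.castRingHom ℂ) with hQ
  have hQmon : Q.Monic := hmon.map _
  have hQdeg : Q.natDegree = 4 := by
    rw [hQ, P.natDegree_map_eq_of_injective (RingHom.injective_int _)]; exact hdeg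
  have hsplits : Q.Splits := IsAlgClosed.splits Q
  have hcard : Q.roots.card = 4 := by
    rw [← hQdeg]; exact (Polynomial.splits_iff_card_roots.mp hsplits)
  obtain ⟨a, hma'⟩ := Multiset.card_pos_iff_exists_mem.mp (show 0 < Multiset.card Q.roots by omega)
  obtain ⟨t1, ht1⟩ := Multiset.exists_cons_of_mem hma'
  have hct1 : Multiset.card t1 = 3 := by
    have := hcard; rw [ht1] at this; simpa using this
  obtain ⟨b, c, d, rfl⟩ := Multiset.card_eq_three.mp hct1
  have hroots_eq : Q.roots = {a, b, c, d} := ht1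
  -- norms of roots
  have habs : ∀ z ∈ Q.roots, Complex.normSq z = p := by
    intro z hz
    have h1 : ‖z‖ = Real.sqrt p :=
      hroots z (Polynomial.isRoot_of_mem_roots hz)
    have : (‖z‖) ^ 2 = (Real.sqrt p) ^ 2 := by rw [h1]
    rw [Complex.sq_norm, Real.sq_sqrt (by positivity)] at this
    exact this
  have hma : a ∈ Q.roots := by rw [hroots_eq]; simp
  have hmb : b ∈ Q.roots := by rw [hroots_eq]; simp
  have hmc : c ∈ Q.roots := by rw [hroots_eq]; simp
  have hmd : d ∈ Q.roots := by rw [hroots_eq]; simp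
  have hna := habs a hma
  have hnb := habs b hmb
  have hnc := habs c hmc
  have hnd := habs d hmd
  -- factorization
  have hprod : (Q.roots.map fun r => X - C r).prod = Q :=
    Polynomial.prod_multiset_X_sub_C_of_monic_of_roots_card_eq hQmon
      (hcard.trans hQdeg.symm)
  have hQeq : Q = (X - C a) * (X - C b) * (X - C c) * (X - C d) := by
    rw [← hprod, hroots_eq]
    simp [Multiset.map_cons, Multiset.prod_cons]
    ring
  have hexp : Q = X ^ 4 - C (a + b + c + d) * X ^ 3
      + C (a*b + a*c + a*d + b*c + b*d + c*d) * X ^ 2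
      - C (a*b*c + a*b*d + a*c*d + b*c*d) * X + C (a*b*c*d) := by
    rw [hQeq]
    simp only [map_add, map_mul]
    ring
  have hcoeff2 : Q.coeff 2 = a*b + a*c + a*d + b*c + b*d + c*d := by
    rw [hexp]
    simp only [coeff_add, coeff_sub, coeff_C_mul, coeff_X_pow, coeff_C, coeff_X]
    norm_num
  have hcoeff3 : Q.coeff 3 = -(a + b + c + d) := by
    rw [hexp]
    simp only [coeff_add, coeff_sub, coeff_C_mul, coeff_X_pow, coeff_C, coeff_X]
    norm_num
  have hc2' : a*b + a*c + a*d + b*c + b*d + c*d = (6 * p : ℂ) := by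
    rw [← hcoeff2, hQ, Polynomial.coeff_map, hc2]
    simp
  -- real part argument
  have hre : (a*b).re + (a*c).re + (a*d).re + (b*c).re + (b*d).re + (c*d).re
      = 6 * p := by
    have := congrArg Complex.re hc2'
    simpa using this
  have key : ∀ x y : ℂ, Complex.normSq x = p → Complex.normSq y = p →
      (x*y).re ≤ (p : ℝ) := by
    intro x y hx hy
    have h1 : (x*y).re ≤ ‖x*y‖ := Complex.re_le_norm _
    have h2 : ‖x*y‖ = p := by
      have : (‖x*y‖) ^ 2 = (p : ℝ) ^ 2 := by
        rw [Complex.sq_norm, Complex.normSq_mul, hx, hy]; ring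
      have habsnn : 0 ≤ ‖x*y‖ := norm_nonneg _
      nlinarith [habsnn]
    linarith
  have kab := key a b hna hnb
  have kac := key a c hna hnc
  have kad := key a d hna hnd
  have kbc := key b c hnb hnc
  have kbd := key b d hnb hnd
  have kcd := key c d hnc hnd
  have key2 : ∀ x y : ℂ, Complex.normSq x = p → Complex.normSq y = p →
      (x*y).re = (p : ℝ) → x * y = (p : ℂ) := by
    intro x y hx hy hre'
    have hns : Complex.normSq (x*y) = (p : ℝ) * p := by
      rw [Complex.normSq_mul, hx, hy]
    exact eq_of_normSq_re hns hre'
  have eab : a * b = (p : ℂ) := key2 a b hna hnb (by linarith)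
  have eac : a * c = (p : ℂ) := key2 a c hna hnc (by linarith)
  have ead : a * d = (p : ℂ) := key2 a d hna hnd (by linarith)
  have ebc : b * c = (p : ℂ) := key2 b c hnb hnc (by linarith)
  -- all roots equal
  have ha0 : a ≠ 0 := by
    intro h; rw [h] at hna; simp at hna
    exact hp.ne_zero ((Nat.cast_eq_zero).mp hna.symm ▸ rfl)
  have hb0 : b ≠ 0 := by
    intro h; rw [h] at hnb; simp at hnb
    exact hp.ne_zero ((Nat.cast_eq_zero).mp hnb.symm ▸ rfl)
  have hbc : b = c := mul_left_cancel₀ ha0 (eab.trans eac.symm)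
  have hbd : b = d := mul_left_cancel₀ ha0 (eab.trans ead.symm)
  have hab : a = b := by
    have hbb : b * b = (p : ℂ) := by rw [← hbc] at ebc; exact ebc
    have : a * b = b * b := by rw [eab, hbb]
    exact mul_right_cancel₀ hb0 this
  have haa : a * a = (p : ℂ) := by rw [hab]; rw [hab] at eab; exact eab
  have hsum : a + b + c + d = 4 * a := by rw [← hbc, ← hbd, ← hab]; ring
  have hcoeff3' : ((P.coeff 3 : ℤ) : ℂ) = -(4 * a) := by
    rw [show ((P.coeff 3 : ℤ) : ℂ) = Q.coeff 3 from by rw [hQ, Polynomial.coeff_map]; rfl,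
      hcoeff3, hsum]
  have hsq : ((P.coeff 3 ^ 2 : ℤ) : ℂ) = ((16 * p : ℤ) : ℂ) := by
    push_cast
    rw [hcoeff3', show (-(4*a))^2 = 16*(a*a) by ring, haa]
  have hsqZ : (P.coeff 3) ^ 2 = 16 * (p : ℤ) := by exact_mod_cast hsq
  exact no_sq_16p p hp _ hsqZ
end
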